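/- Let x and C be symmetric n×n complex matrices. Then tr(C·(Y·x + x·Yᵀ)) = 0 for every n×n complex matrix Y if and only if x·C = 0. (This identifies the conormal space at x to the GL(n,ℂ)-orbit {g·x·gᵀ} inside the space of symmetric matrices, under the trace pairing.) -/

import Mathlib

open Matrix

/-- For symmetric n×n complex matrices `x` and `C`, one has
`tr(C·(Y·x + x·Yᵀ)) = 0` for every n×n complex matrix `Y` iff `x·C = 0`. -/
theorem conormal_symmetric_orbit (n : ℕ) (x C : Matrix (Fin n) (Fin n) ℂ)
    (hx : xᵀ = x) (hC : Cᵀ = C) :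
    (∀ Y : Matrix (Fin n) (Fin n) ℂ, (C * (Y * x + x * Yᵀ)).trace = 0) ↔ x * C = 0 := by
  constructor
  · intro h
    have key : ∀ Y : Matrix (Fin n) (Fin n) ℂ, (x * C * Y).trace = 0 := by
      intro Y
      have h1 := h Y
      rw [mul_add, trace_add] at h1
      have e1 : (C * (Y * x)).trace = (x * C * Y).trace := by
        rw [← mul_assoc, trace_mul_cycle]
      have e2 : (C * (x * Yᵀ)).trace = (x * C * Y).trace := by
        rw [← trace_transpose, transpose_mul, transpose_mul, transpose_transpose,
          hx, hC, mul_assoc, trace_mul_comm]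
      rw [e1, e2] at h1
      have : (2 : ℂ) * (x * C * Y).trace = 0 := by ring_nf; linear_combination h1
      simpa using this
    ext i j
    have := key (single j i 1)
    simp only [Matrix.trace, Matrix.diag, Matrix.mul_apply, Matrix.single,
      Matrix.of_apply] at this
    simp only [Matrix.zero_apply]
    rw [← this, Matrix.mul_apply]
    rw [Finset.sum_comm]
    simp [ite_and, Finset.sum_ite_eq]
  · intro h Y
    have hCx : C * x = 0 := by
      have := congrArg transpose h
      simpa [transpose_mul, hx, hC] using this
    rw [mul_add, trace_add, ← mul_assoc, trace_mul_cycle, mul_assoc, ← mul_assoc x C, h,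
      ← mul_assoc, hCx]
    simp
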